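/- Let φ be a monotone Boolean formula defining a set S ⊆ {0,1}^n, let Q ⊆ [0,1]^n be a convex set containing S, and let p ∈ ℤ≥0. If every monotone inequality in standard form of pitch at most p that is valid for S is also valid for Q, then every monotone inequality in standard form of pitch at most p + 1 that is valid for S is valid for φ(Q). -/

import Mathlib

/-- Reduced Boolean formulas: literals combined with `∧` and `∨`. -/
inductive Fml (n : ℕ) : Type
  | pos : Fin n → Fml n
  | neg : Fin n → Fml n
  | and : Fml n → Fml n → Fml n
  | or  : Fml n → Fml n → Fml n

namespace Fml

/-- Evaluation of a reduced formula on a (0/1-valued) real point. -/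
def eval {n : ℕ} : Fml n → (Fin n → ℝ) → Prop
  | pos i, x => x i = 1
  | neg i, x => x i = 0
  | and φ ψ, x => φ.eval x ∧ ψ.eval x
  | or φ ψ, x => φ.eval x ∨ ψ.eval x

/-- The set `φ(Q)` obtained by feeding the convex set `Q` into the formula `φ`. -/
def app {n : ℕ} : Fml n → Set (Fin n → ℝ) → Set (Fin n → ℝ)
  | pos i, Q => {x ∈ Q | x i = 1}
  | neg i, Q => {x ∈ Q | x i = 0}
  | and φ ψ, Q => φ.app Q ∩ ψ.app Q
  | or φ ψ, Q => convexHull ℝ (φ.app Q ∪ ψ.app Q)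

/-- A formula is monotone if it contains no negated literals. -/
def Monotone {n : ℕ} : Fml n → Prop
  | pos _ => True
  | neg _ => False
  | and φ ψ => φ.Monotone ∧ ψ.Monotone
  | or φ ψ => φ.Monotone ∧ ψ.Monotone

end Fml

/-- The 0/1 points of the cube. -/
def CubeVerts (n : ℕ) : Set (Fin n → ℝ) := {x | ∀ i, x i = 0 ∨ x i = 1}

/-- The inequality `∑ c i * x i ≥ δ` has pitch at most `p`: every subset `J` of
the support of `c` with `|J| ≥ p` satisfies `∑_{j ∈ J} c j ≥ δ`. -/
def PitchLE {n : ℕ} (c : Fin n → ℝ) (δ : ℝ) (p : ℕ) : Prop :=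
  ∀ J : Finset (Fin n), (∀ j ∈ J, c j ≠ 0) → p ≤ J.card → δ ≤ ∑ j ∈ J, c j

deriving instance DecidableEq for Fml

namespace StmtTwoAux

/-- Size of a formula (number of nodes). -/
def fsize {n : ℕ} : Fml n → ℕ
  | Fml.pos _ => 1
  | Fml.neg _ => 1
  | Fml.and A B => fsize A + fsize B + 1
  | Fml.or A B => fsize A + fsize B + 1

lemma fsize_pos {n : ℕ} (θ : Fml n) : 1 ≤ fsize θ := by
  cases θ <;> simp [fsize] <;> omega

/-- Monotone formulas are monotone under pointwise increase (target bounded by 1). -/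
lemma eval_mono {n : ℕ} {θ : Fml n} (hm : θ.Monotone) {v w : Fin n → ℝ}
    (hvw : ∀ i, v i ≤ w i) (hw1 : ∀ i, w i ≤ 1) (he : θ.eval v) : θ.eval w := by
  induction θ with
  | pos i =>
      have h1 : (1 : ℝ) ≤ w i := by
        have := hvw i
        simp only [Fml.eval] at he
        linarith
      exact le_antisymm (hw1 i) h1
  | neg i => exact absurd hm (by simp [Fml.Monotone])
  | and A B ihA ihB =>
      obtain ⟨hA, hB⟩ := he
      exact ⟨ihA hm.1 hA, ihB hm.2 hB⟩
  | or A B ihA ihB =>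
      rcases he with hA | hB
      · exact Or.inl (ihA hm.1 hA)
      · exact Or.inr (ihB hm.2 hB)

lemma app_subset {n : ℕ} {Q : Set (Fin n → ℝ)} (hQconv : Convex ℝ Q) :
    ∀ θ : Fml n, θ.app Q ⊆ Q := by
  intro θ
  induction θ with
  | pos i => exact fun x hx => hx.1
  | neg i => exact fun x hx => hx.1
  | and A B ihA ihB => exact fun x hx => ihA hx.1
  | or A B ihA ihB =>
      exact convexHull_min (Set.union_subset ihA ihB) hQconv

/-- Key sum identity for zeroing out a coordinate. -/
lemma sum_zeroed {n : ℕ} (c : Fin n → ℝ) (i : Fin n) (y : Fin n → ℝ) :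
    (∑ j, (if j = i then 0 else c j) * y j) + c i * y i = ∑ j, c j * y j := by
  classical
  have h1 : ∑ j, c j * y j
      = ∑ j ∈ Finset.univ.erase i, c j * y j + c i * y i :=
    (Finset.sum_erase_add _ _ (Finset.mem_univ i)).symm
  have h2 : ∑ j, (if j = i then (0:ℝ) else c j) * y j
      = ∑ j ∈ Finset.univ.erase i, (if j = i then (0:ℝ) else c j) * y j
        + (if i = i then (0:ℝ) else c i) * y i :=
    (Finset.sum_erase_add _ _ (Finset.mem_univ i)).symm
  have h3 : ∑ j ∈ Finset.univ.erase i, (if j = i then (0:ℝ) else c j) * y j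
      = ∑ j ∈ Finset.univ.erase i, c j * y j := by
    refine Finset.sum_congr rfl ?_
    intro j hj
    rw [if_neg (Finset.ne_of_mem_erase hj)]
  rw [h2, h3, if_pos rfl, zero_mul, add_zero, h1]

/-- If every formula in the list has a "cheap" vertex model, then there is a common
vertex model that is cheap (take the pointwise max). -/
lemma exists_W {n : ℕ} (c : Fin n → ℝ) (hc : ∀ i, 0 ≤ c i) :
    ∀ (Ψ : List (Fml n)), (∀ θ ∈ Ψ, θ.Monotone) →
      (∀ θ ∈ Ψ, ∃ v, v ∈ CubeVerts n ∧ θ.eval v ∧ ∑ i, c i * v i ≤ 0) →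
      ∃ W, W ∈ CubeVerts n ∧ (∀ θ ∈ Ψ, θ.eval W) ∧ ∑ i, c i * W i ≤ 0 := by
  intro Ψ
  induction Ψ with
  | nil =>
      intro _ _
      refine ⟨0, fun i => Or.inl rfl, by simp, by simp⟩
  | cons θ rest ih =>
      intro hmono hall
      obtain ⟨v, hv, hev, hsv⟩ := hall θ (by simp)
      obtain ⟨W, hW, heW, hsW⟩ := ih (fun θ' h => hmono θ' (by simp [h]))
        (fun θ' h => hall θ' (by simp [h]))
      refine ⟨fun j => max (v j) (W j), ?_, ?_, ?_⟩
      · intro j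
        rcases hv j with h | h <;> rcases hW j with h' | h' <;> simp [h, h']
      · intro θ' hθ'
        have hle1 : ∀ j, max (v j) (W j) ≤ 1 := by
          intro j
          rcases hv j with h | h <;> rcases hW j with h' | h' <;> simp [h, h']
        rcases List.mem_cons.mp hθ' with h | h
        · subst h
          exact eval_mono (hmono θ' (by simp)) (fun j => le_max_left _ _) hle1 hev
        · exact eval_mono (hmono θ' (by simp [h])) (fun j => le_max_right _ _) hle1
            (heW θ' h)
      · have hpt : ∀ j, c j * max (v j) (W j) ≤ c j * v j + c j * W j := by
          intro j
          have h0v : 0 ≤ v j := by rcases hv j with h | h <;> simp [h]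
          have h0W : 0 ≤ W j := by rcases hW j with h | h <;> simp [h]
          have hmax : max (v j) (W j) ≤ v j + W j :=
            max_le (by linarith) (by linarith)
          nlinarith [hc j]
        calc ∑ i, c i * max (v i) (W i)
            ≤ ∑ i, (c i * v i + c i * W i) := Finset.sum_le_sum (fun i _ => hpt i)
          _ = (∑ i, c i * v i) + ∑ i, c i * W i := Finset.sum_add_distrib
          _ ≤ 0 := by linarith

lemma main_lem {n : ℕ} (p : ℕ) (S Q : Set (Fin n → ℝ))
    (hQconv : Convex ℝ Q) (hQcube : Q ⊆ Set.Icc (0 : Fin n → ℝ) 1)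
    (hSsub : S ⊆ Set.Icc (0 : Fin n → ℝ) 1)
    (hQvalid : ∀ (c : Fin n → ℝ) (δ : ℝ), (∀ i, 0 ≤ c i) → 0 ≤ δ → PitchLE c δ p →
      (∀ x ∈ S, δ ≤ ∑ i, c i * x i) → ∀ x ∈ Q, δ ≤ ∑ i, c i * x i) :
    ∀ (N : ℕ) (Ψ : List (Fml n)), (Ψ.map fsize).sum ≤ N → (∀ θ ∈ Ψ, θ.Monotone) →
      ∀ (c : Fin n → ℝ) (δ : ℝ), (∀ i, 0 ≤ c i) → PitchLE c δ (p + 1) →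
        (∀ v ∈ S, δ ≤ ∑ i, c i * v i) →
        (∀ v, v ∈ CubeVerts n → (∀ θ ∈ Ψ, θ.eval v) → 0 < ∑ i, c i * v i) →
        ∀ x, x ∈ Q → (∀ θ ∈ Ψ, x ∈ θ.app Q) → δ ≤ ∑ i, c i * x i := by
  intro N
  induction N using Nat.strong_induction_on with
  | _ N IH =>
  intro Ψ hsize hmono c δ hc hpitch hvalidS hPOS x hxQ hxT
  have hx01 : ∀ i, 0 ≤ x i := fun i => (hQcube hxQ).1 i
  by_cases hδ0 : δ ≤ 0
  · have h0 : 0 ≤ ∑ i, c i * x i :=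
      Finset.sum_nonneg (fun i _ => mul_nonneg (hc i) (hx01 i))
    linarith
  push_neg at hδ0
  by_cases hp : PitchLE c δ p
  · exact hQvalid c δ hc hδ0.le hp hvalidS x hxQ
  by_cases hlitpos : ∃ i, Fml.pos i ∈ Ψ ∧ c i ≠ 0
  · -- positive-coefficient literal: consume it
    obtain ⟨i, hiΨ, hci⟩ := hlitpos
    have hxi : x i = 1 := (hxT _ hiΨ).2
    have hcipos : 0 < c i := lt_of_le_of_ne (hc i) (Ne.symm hci)
    by_cases hδci : δ ≤ c i
    · have h1 : c i * x i ≤ ∑ j, c j * x j :=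
        Finset.single_le_sum (f := fun j => c j * x j)
          (fun j _ => mul_nonneg (hc j) (hx01 j)) (Finset.mem_univ i)
      rw [hxi, mul_one] at h1
      linarith
    · push_neg at hδci
      set c' : Fin n → ℝ := fun j => if j = i then 0 else c j with hc'def
      have hc'0 : ∀ j, 0 ≤ c' j := by
        intro j
        by_cases h : j = i <;> simp [hc'def, h, hc j]
      have hpitch' : PitchLE c' (δ - c i) p := by
        intro J hJ hcard
        have hiJ : i ∉ J := by
          intro h
          exact hJ i h (by simp [hc'def])
        have hkey := hpitch (insert i J) ?_ ?_
        · rw [Finset.sum_insert hiJ] at hkey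
          have hJeq : ∑ j ∈ J, c j = ∑ j ∈ J, c' j := by
            refine Finset.sum_congr rfl ?_
            intro j hj
            have : j ≠ i := fun h => hiJ (h ▸ hj)
            simp [hc'def, this]
          linarith [hJeq]
        · intro j hj
          rcases Finset.mem_insert.mp hj with h | h
          · subst h; exact hci
          · have := hJ j h
            have hji : j ≠ i := fun hh => hiJ (hh ▸ h)
            simpa [hc'def, hji] using this
        · rw [Finset.card_insert_of_notMem hiJ]; omega
      have hvalid' : ∀ v ∈ S, δ - c i ≤ ∑ j, c' j * v j := by
        intro v hv
        have h2 := hvalidS v hv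
        have h3 := sum_zeroed c i v
        have hv1 : v i ≤ 1 := (hSsub hv).2 i
        have hv0 : 0 ≤ v i := (hSsub hv).1 i
        have : c i * v i ≤ c i := by nlinarith
        simp only [hc'def] at *
        linarith
      have hQ' := hQvalid c' (δ - c i) hc'0 (by linarith) hpitch' hvalid' x hxQ
      have h3 := sum_zeroed c i x
      rw [hxi, mul_one] at h3
      simp only [hc'def] at *
      linarith
  by_cases hlit0 : ∃ i, Fml.pos i ∈ Ψ
  · -- zero-coefficient literal: drop it
    obtain ⟨i, hiΨ⟩ := hlit0
    have hci : c i = 0 := by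
      by_contra h
      exact hlitpos ⟨i, hiΨ, h⟩
    set Ψ' := Ψ.erase (Fml.pos i) with hΨ'def
    have hperm : Ψ.Perm (Fml.pos i :: Ψ') := List.perm_cons_erase hiΨ
    have hsum : (Ψ.map fsize).sum = fsize (Fml.pos i) + (Ψ'.map fsize).sum := by
      have := (hperm.map fsize).sum_eq
      simpa using this
    have hsz : (Ψ'.map fsize).sum < N := by
      simp [fsize] at hsum
      omega
    refine IH _ hsz Ψ' le_rfl
      (fun θ h => hmono θ (List.mem_of_mem_erase h)) c δ hc hpitch hvalidS ?_ x hxQ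
      (fun θ h => hxT θ (List.mem_of_mem_erase h))
    -- POS for Ψ'
    intro v hv hev
    set w : Fin n → ℝ := fun j => if j = i then 1 else v j with hwdef
    have hwv : w ∈ CubeVerts n := by
      intro j
      by_cases h : j = i
      · simp [hwdef, h]
      · simpa [hwdef, h] using hv j
    have hvw : ∀ j, v j ≤ w j := by
      intro j
      by_cases h : j = i
      · have hw : w j = 1 := by simp [hwdef, h]
        rw [hw]
        rcases hv j with h' | h' <;> rw [h'] <;> norm_num
      · simp [hwdef, h]
    have hw1 : ∀ j, w j ≤ 1 := by
      intro j
      rcases hwv j with h | h <;> simp [h]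
    have hevΨ : ∀ θ ∈ Ψ, θ.eval w := by
      intro θ hθ
      by_cases hθi : θ = Fml.pos i
      · subst hθi
        show w i = 1
        simp [hwdef]
      · have hθ' : θ ∈ Ψ' := (List.mem_erase_of_ne hθi).mpr hθ
        exact eval_mono (hmono θ hθ) hvw hw1 (hev θ hθ')
    have hPw := hPOS w hwv hevΨ
    have hsumeq : ∑ j, c j * w j = ∑ j, c j * v j := by
      refine Finset.sum_congr rfl ?_
      intro j _
      by_cases h : j = i
      · subst h; simp [hwdef, hci]
      · simp [hwdef, h]
    linarith [hsumeq ▸ hPw]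
  by_cases hand : ∃ A B, Fml.and A B ∈ Ψ
  · -- flatten a conjunction
    obtain ⟨A, B, hABΨ⟩ := hand
    set Ψ' := A :: B :: Ψ.erase (Fml.and A B) with hΨ'def
    have hperm : Ψ.Perm (Fml.and A B :: Ψ.erase (Fml.and A B)) :=
      List.perm_cons_erase hABΨ
    have hsum : (Ψ.map fsize).sum
        = fsize (Fml.and A B) + ((Ψ.erase (Fml.and A B)).map fsize).sum := by
      have := (hperm.map fsize).sum_eq
      simpa using this
    have hsz : (Ψ'.map fsize).sum < N := by
      simp only [hΨ'def, List.map_cons, List.sum_cons]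
      simp [fsize] at hsum
      omega
    have hmAB := hmono _ hABΨ
    refine IH _ hsz Ψ' le_rfl ?_ c δ hc hpitch hvalidS ?_ x hxQ ?_
    · intro θ hθ
      rcases List.mem_cons.mp hθ with h | hθ
      · subst h; exact hmAB.1
      rcases List.mem_cons.mp hθ with h | hθ
      · subst h; exact hmAB.2
      · exact hmono θ (List.mem_of_mem_erase hθ)
    · intro v hv hev
      refine hPOS v hv ?_
      intro θ hθ
      by_cases hθi : θ = Fml.and A B
      · subst hθi
        exact ⟨hev A (by simp [hΨ'def]), hev B (by simp [hΨ'def])⟩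
      · have hθ' : θ ∈ Ψ.erase (Fml.and A B) := (List.mem_erase_of_ne hθi).mpr hθ
        exact hev θ (by simp [hΨ'def, hθ'])
    · intro θ hθ
      rcases List.mem_cons.mp hθ with h | hθ
      · subst h; exact (hxT _ hABΨ).1
      rcases List.mem_cons.mp hθ with h | hθ
      · subst h; exact (hxT _ hABΨ).2
      · exact hxT θ (List.mem_of_mem_erase hθ)
  · -- all remaining formulas are disjunctions; find an "eligible" one
    have helig : ∃ A B, Fml.or A B ∈ Ψ ∧
        (∀ v, v ∈ CubeVerts n → (Fml.or A B).eval v → 0 < ∑ i, c i * v i) := by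
      by_contra hno
      push_neg at hno
      have hall : ∀ θ ∈ Ψ, ∃ v, v ∈ CubeVerts n ∧ θ.eval v ∧ ∑ i, c i * v i ≤ 0 := by
        intro θ hθ
        match θ with
        | Fml.pos i => exact absurd ⟨i, hθ⟩ hlit0
        | Fml.neg i => exact absurd (hmono _ hθ) (by simp [Fml.Monotone])
        | Fml.and A B => exact absurd ⟨A, B, hθ⟩ hand
        | Fml.or A B =>
            obtain ⟨v, hv, hev, hle⟩ := hno A B hθ
            exact ⟨v, hv, hev, hle⟩
      obtain ⟨W, hWv, hWe, hWs⟩ := exists_W c hc Ψ hmono hall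
      linarith [hPOS W hWv hWe]
    obtain ⟨A, B, hABΨ, hAB⟩ := helig
    have hmAB := hmono _ hABΨ
    -- size bounds for the branches
    have hmem : fsize (Fml.or A B) ∈ Ψ.map fsize := List.mem_map_of_mem hABΨ
    have hfle : fsize (Fml.or A B) ≤ (Ψ.map fsize).sum :=
      List.single_le_sum (fun a _ => Nat.zero_le a) _ hmem
    have hszA : fsize A < N := by
      have hB := fsize_pos B
      simp [fsize] at hfle
      omega
    have hszB : fsize B < N := by
      have hA := fsize_pos A
      simp [fsize] at hfle
      omega
    -- the half-space is convex
    set H : Set (Fin n → ℝ) := {y | δ ≤ ∑ i, c i * y i} with hHdef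
    have hHconv : Convex ℝ H := by
      intro u hu v hv a b ha hb hab
      simp only [hHdef, Set.mem_setOf_eq] at *
      have heq : ∑ i, c i * (a • u + b • v) i
          = a * (∑ i, c i * u i) + b * (∑ i, c i * v i) := by
        rw [Finset.mul_sum, Finset.mul_sum, ← Finset.sum_add_distrib]
        refine Finset.sum_congr rfl ?_
        intro i _
        simp [Pi.add_apply, Pi.smul_apply, smul_eq_mul]
        ring
      rw [heq]
      nlinarith
    have hbranch : ∀ (C : Fml n), C.Monotone → fsize C < N →
        (∀ v, v ∈ CubeVerts n → C.eval v → 0 < ∑ i, c i * v i) →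
        C.app Q ⊆ H := by
      intro C hmC hszC hPC y hy
      have hyQ : y ∈ Q := app_subset hQconv C hy
      have := IH (fsize C) hszC [C] (by simp) (by simpa using hmC) c δ hc hpitch
        hvalidS ?_ y hyQ ?_
      · exact this
      · intro v hv hev
        exact hPC v hv (hev C (by simp))
      · intro θ hθ
        simp at hθ
        subst hθ
        exact hy
    have hsubH : A.app Q ∪ B.app Q ⊆ H := by
      refine Set.union_subset ?_ ?_
      · exact hbranch A hmAB.1 hszA (fun v hv he => hAB v hv (Or.inl he))
      · exact hbranch B hmAB.2 hszB (fun v hv he => hAB v hv (Or.inr he))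
    have hxhull : x ∈ convexHull ℝ (A.app Q ∪ B.app Q) := hxT _ hABΨ
    exact convexHull_min hsubH hHconv hxhull

end StmtTwoAux

theorem stmt2 {n : ℕ} (φ : Fml n) (hmono : φ.Monotone) (S Q : Set (Fin n → ℝ))
    (hS : S = {x ∈ CubeVerts n | φ.eval x})
    (hQconv : Convex ℝ Q) (hQcube : Q ⊆ Set.Icc (0 : Fin n → ℝ) 1) (hSQ : S ⊆ Q)
    (p : ℕ)
    (hQvalid : ∀ (c : Fin n → ℝ) (δ : ℝ), (∀ i, 0 ≤ c i) → 0 ≤ δ → PitchLE c δ p →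
      (∀ x ∈ S, δ ≤ ∑ i, c i * x i) → ∀ x ∈ Q, δ ≤ ∑ i, c i * x i) :
    ∀ (c : Fin n → ℝ) (δ : ℝ), (∀ i, 0 ≤ c i) → 0 ≤ δ → PitchLE c δ (p + 1) →
      (∀ x ∈ S, δ ≤ ∑ i, c i * x i) → ∀ x ∈ φ.app Q, δ ≤ ∑ i, c i * x i := by
  intro c δ hc hδ hpitch hvalid x hx
  have hxQ : x ∈ Q := StmtTwoAux.app_subset hQconv φ hx
  by_cases hδ0 : δ ≤ 0
  · have h0 : 0 ≤ ∑ i, c i * x i :=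
      Finset.sum_nonneg (fun i _ => mul_nonneg (hc i) ((hQcube hxQ).1 i))
    linarith
  push_neg at hδ0
  refine StmtTwoAux.main_lem p S Q hQconv hQcube (Set.Subset.trans hSQ hQcube) hQvalid
    (StmtTwoAux.fsize φ) [φ] (by simp) (by simpa using hmono) c δ hc hpitch hvalid
    ?_ x hxQ ?_
  · intro v hv hev
    have hvS : v ∈ S := by
      rw [hS]
      exact ⟨hv, hev φ (by simp)⟩
    have := hvalid v hvS
    linarith
  · intro θ hθ
    simp at hθ
    subst hθ
    exact hx
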